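/- Let ν be a measure on (0,∞) such that ν((x,∞)) < ∞ for every x > 0, let K : (0,∞) → [0,∞) be measurable with ∫_{(0,∞)} (√(K) − 1)² dν < ∞, and let α > 0 and c ≥ 0. If lim_{x → 0⁺} x^α ∫_{(x,∞)} K dν = c, then lim_{x → 0⁺} x^α ν((x,∞)) = c. -/

import Mathlib

open MeasureTheory Filter Topology Set

/-- let `ν` be a measure (on `(0,∞)`) whose tails `ν((x,∞))` are finite for
every `x > 0`, and let `K ≥ 0` be measurable with finite Hellinger-type discrepancy
`∫_{(0,∞)} (√K − 1)² dν < ∞`. If `x^α ∫_{(x,∞)} K dν → c` as `x → 0⁺`, then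
`x^α ν((x,∞)) → c` as `x → 0⁺`. -/
theorem stmt4 (ν : Measure ℝ) (K : ℝ → ℝ) (α c : ℝ) (hα : 0 < α) (hc : 0 ≤ c)
    (hνfin : ∀ x : ℝ, 0 < x → ν (Ioi x) < ⊤)
    (hKmeas : Measurable K) (hKnn : ∀ x, 0 ≤ K x)
    (hI : IntegrableOn (fun x => (Real.sqrt (K x) - 1) ^ 2) (Ioi 0) ν)
    (hlim : Tendsto (fun x : ℝ => x ^ α * ∫ z in Ioi x, K z ∂ν) (𝓝[>] 0) (𝓝 c)) :
    Tendsto (fun x : ℝ => x ^ α * (ν (Ioi x)).toReal) (𝓝[>] 0) (𝓝 c) := by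
  set s : ℝ → ℝ := fun z => Real.sqrt (K z) - 1 with hs
  set D₀ : ℝ := ∫ z in Ioi 0, (s z) ^ 2 ∂ν with hD₀def
  have hD₀nn : 0 ≤ D₀ := setIntegral_nonneg measurableSet_Ioi fun z _ => sq_nonneg _
  set A : ℝ → ℝ := fun x => ∫ z in Ioi x, K z ∂ν with hA
  set B : ℝ → ℝ := fun x => (ν (Ioi x)).toReal with hB
  have hAnn : ∀ x : ℝ, 0 < x → 0 ≤ A x := fun x hx =>
    setIntegral_nonneg measurableSet_Ioi fun z _ => hKnn z
  have hBnn : ∀ x : ℝ, 0 ≤ B x := fun x => ENNReal.toReal_nonneg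
  have heqK : ∀ z, K z = (s z) ^ 2 + 2 * s z + 1 := by
    intro z
    have h := Real.sq_sqrt (hKnn z)
    simp only [hs]
    nlinarith [h]
  have key : ∀ x : ℝ, 0 < x → ∀ t : ℝ, 0 < t →
      |A x - B x| ≤ (1 + t) * D₀ + B x / t := by
    intro x hx t ht
    have hfin := hνfin x hx
    have hsub : Ioi x ⊆ Ioi 0 := Ioi_subset_Ioi hx.le
    have h1 : IntegrableOn (fun z => (s z) ^ 2) (Ioi x) ν := hI.mono_set hsub
    have h2 : IntegrableOn (fun _ => (1 : ℝ)) (Ioi x) ν :=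
      integrableOn_const hfin.ne
    have h2' : IntegrableOn (fun _ => 1 / t) (Ioi x) ν :=
      integrableOn_const hfin.ne
    have hsI : IntegrableOn s (Ioi x) ν := by
      have hg : Integrable (fun z => ((s z) ^ 2 + 1) / 2) (ν.restrict (Ioi x)) :=
        (h1.add h2).div_const 2
      refine Integrable.mono' hg
        (((hKmeas.sqrt).sub measurable_const).aestronglyMeasurable) ?_
      refine ae_of_all _ fun z => ?_
      have habs : ∀ a : ℝ, |a| ≤ (a ^ 2 + 1) / 2 := fun a => by
        nlinarith [sq_nonneg (|a| - 1), sq_abs a]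
      simpa [Real.norm_eq_abs] using habs (s z)
    have hdec : A x = (∫ z in Ioi x, (s z) ^ 2 ∂ν) + 2 * (∫ z in Ioi x, s z ∂ν) + B x := by
      have h3 : A x = ∫ z in Ioi x, ((s z) ^ 2 + 2 * s z + 1) ∂ν :=
        integral_congr_ae (ae_of_all _ fun z => heqK z)
      have hadd : Integrable (fun z => (s z) ^ 2 + 2 * s z) (ν.restrict (Ioi x)) :=
        h1.add (hsI.const_mul 2)
      have h2'' : Integrable (fun _ : ℝ => (1 : ℝ)) (ν.restrict (Ioi x)) := h2
      rw [h3, integral_add hadd h2'', integral_add h1 (hsI.const_mul 2),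
        integral_const_mul, setIntegral_const]
      simp [hB, smul_eq_mul, measureReal_def]
    have hD : (∫ z in Ioi x, (s z) ^ 2 ∂ν) ≤ D₀ :=
      setIntegral_mono_set hI (ae_of_all _ fun z => sq_nonneg _)
        (HasSubset.Subset.eventuallyLE hsub)
    have hDnn : 0 ≤ ∫ z in Ioi x, (s z) ^ 2 ∂ν :=
      setIntegral_nonneg measurableSet_Ioi fun z _ => sq_nonneg _
    have hE : |∫ z in Ioi x, s z ∂ν| ≤
        (t * (∫ z in Ioi x, (s z) ^ 2 ∂ν) + B x / t) / 2 := by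
      have h3 : |∫ z in Ioi x, s z ∂ν| ≤ ∫ z in Ioi x, |s z| ∂ν := by
        simpa [Real.norm_eq_abs] using
          norm_integral_le_integral_norm (μ := ν.restrict (Ioi x)) s
      have h4 : (∫ z in Ioi x, |s z| ∂ν) ≤
          ∫ z in Ioi x, (t * (s z) ^ 2 + 1 / t) / 2 ∂ν := by
        have hrhs : Integrable (fun z => (t * (s z) ^ 2 + 1 / t) / 2) (ν.restrict (Ioi x)) :=
          ((h1.const_mul t).add h2').div_const 2
        refine integral_mono hsI.abs hrhs fun z => ?_
        have habs : ∀ a : ℝ, |a| ≤ (t * a ^ 2 + 1 / t) / 2 := fun a => by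
          have h1t : t * (1 / t) = 1 := by field_simp
          nlinarith [sq_nonneg (t * |a| - 1), sq_abs a, mul_pos ht ht, ht.le,
            abs_nonneg a, h1t]
        exact habs (s z)
      have h5 : (∫ z in Ioi x, (t * (s z) ^ 2 + 1 / t) / 2 ∂ν) =
          (t * (∫ z in Ioi x, (s z) ^ 2 ∂ν) + B x / t) / 2 := by
        have haddt : Integrable (fun z => t * (s z) ^ 2) (ν.restrict (Ioi x)) :=
          h1.const_mul t
        have h2'' : Integrable (fun _ : ℝ => 1 / t) (ν.restrict (Ioi x)) := h2'
        rw [integral_div, integral_add haddt h2'', integral_const_mul,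
          setIntegral_const]
        simp only [hB, smul_eq_mul, measureReal_def]
        ring
      rw [h5] at h4
      exact h3.trans h4
    have habs : |A x - B x| ≤ (∫ z in Ioi x, (s z) ^ 2 ∂ν) +
        2 * |∫ z in Ioi x, s z ∂ν| := by
      have : A x - B x = (∫ z in Ioi x, (s z) ^ 2 ∂ν) + 2 * (∫ z in Ioi x, s z ∂ν) := by
        rw [hdec]; ring
      rw [this]
      calc |(∫ z in Ioi x, (s z) ^ 2 ∂ν) + 2 * (∫ z in Ioi x, s z ∂ν)|
          ≤ |∫ z in Ioi x, (s z) ^ 2 ∂ν| + |2 * (∫ z in Ioi x, s z ∂ν)| := abs_add_le _ _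
        _ = (∫ z in Ioi x, (s z) ^ 2 ∂ν) + 2 * |∫ z in Ioi x, s z ∂ν| := by
            rw [abs_of_nonneg hDnn, abs_mul, abs_of_nonneg (by norm_num : (0:ℝ) ≤ 2)]
    nlinarith [hE, habs, hD, hDnn, ht]
  have hbound : ∀ x : ℝ, 0 < x → B x ≤ 2 * A x + 6 * D₀ := by
    intro x hx
    have hk := key x hx 2 two_pos
    have h1 : B x - A x ≤ |A x - B x| := by
      rw [abs_sub_comm]; exact le_abs_self _
    linarith
  have key2 : ∀ x : ℝ, 0 < x → ∀ t : ℝ, 0 < t →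
      |A x - B x| ≤ (1 + t) * D₀ + (2 * A x + 6 * D₀) / t := by
    intro x hx t ht
    have hk := key x hx t ht
    have hb := hbound x hx
    have : B x / t ≤ (2 * A x + 6 * D₀) / t := by gcongr
    linarith
  -- the limit argument
  have hp : Tendsto (fun x : ℝ => x ^ α) (𝓝[>] (0 : ℝ)) (𝓝 0) := by
    have h := (Real.continuousAt_rpow_const 0 α (Or.inr hα.le)).tendsto
    rw [Real.zero_rpow hα.ne'] at h
    exact h.mono_left nhdsWithin_le_nhds
  rw [Metric.tendsto_nhds]
  intro ε hε
  set t : ℝ := 2 * (c + 1) / ε with htdef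
  have ht : 0 < t := by positivity
  have hct : 2 * c / t < ε := by
    rw [div_lt_iff₀ ht]
    have hεt : ε * t = 2 * (c + 1) := by
      rw [htdef]; field_simp
    linarith
  have h0 : Tendsto (fun x : ℝ => x ^ α * D₀) (𝓝[>] (0 : ℝ)) (𝓝 0) := by
    simpa using hp.mul_const D₀
  have habs : Tendsto (fun x : ℝ => |x ^ α * A x - c|) (𝓝[>] (0 : ℝ)) (𝓝 0) := by
    have := (hlim.sub (tendsto_const_nhds (x := c))).abs
    simpa using this
  have hg : Tendsto (fun x : ℝ => |x ^ α * A x - c| + (1 + t) * (x ^ α * D₀) +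
      (2 * (x ^ α * A x) + 6 * (x ^ α * D₀)) / t) (𝓝[>] (0 : ℝ)) (𝓝 (2 * c / t)) := by
    have h := (habs.add (h0.const_mul (1 + t))).add
      (((hlim.const_mul 2).add (h0.const_mul 6)).div_const t)
    have : (0 : ℝ) + (1 + t) * 0 + (2 * c + 6 * 0) / t = 2 * c / t := by ring
    rwa [this] at h
  have hev := hg.eventually_lt_const hct
  filter_upwards [hev, self_mem_nhdsWithin] with x hgx hx
  have hx' : (0 : ℝ) < x := hx
  rw [Real.dist_eq]
  have hxα : 0 ≤ x ^ α := Real.rpow_nonneg hx'.le α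
  have hk := key2 x hx' t ht
  have hmul := mul_le_mul_of_nonneg_left hk hxα
  have heq : x ^ α * ((1 + t) * D₀ + (2 * A x + 6 * D₀) / t) =
      (1 + t) * (x ^ α * D₀) + (2 * (x ^ α * A x) + 6 * (x ^ α * D₀)) / t := by
    field_simp
  rw [heq] at hmul
  have hsplit : |x ^ α * B x - c| ≤ |x ^ α * A x - c| + x ^ α * |A x - B x| := by
    have h1 : x ^ α * B x - c = (x ^ α * A x - c) - x ^ α * (A x - B x) := by ring
    rw [h1]
    calc |(x ^ α * A x - c) - x ^ α * (A x - B x)|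
        ≤ |x ^ α * A x - c| + |x ^ α * (A x - B x)| := abs_sub _ _
      _ = |x ^ α * A x - c| + x ^ α * |A x - B x| := by
          rw [abs_mul, abs_of_nonneg hxα]
  calc |x ^ α * B x - c| ≤ |x ^ α * A x - c| + x ^ α * |A x - B x| := hsplit
    _ ≤ |x ^ α * A x - c| + (1 + t) * (x ^ α * D₀) +
        (2 * (x ^ α * A x) + 6 * (x ^ α * D₀)) / t := by linarith
    _ < ε := hgx
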